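/- arXiv:1101.0435 — 16 statements merged into one kernel-verified Lean document; each statement's English description precedes it below -/
import Mathlib

section
/- In a Hom-dendriform algebra (A, ≺, ≻, α), the operation x ⋆ y = x ≺ y + x ≻ y makes (A, ⋆, α) a Hom-associative algebra, i.e., α(x) ⋆ (y ⋆ z) = (x ⋆ y) ⋆ α(z) for all x, y, z ∈ A. -/
/-- In a Hom-dendriform algebra `(A, ≺, ≻, α)`, the operation `x ⋆ y = x ≺ y + x ≻ y`
makes `(A, ⋆, α)` a Hom-associative algebra. -/
theorem stmt_0 {K A : Type*} [Field K] [AddCommGroup A] [Module K A]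
    (p s : A →ₗ[K] A →ₗ[K] A) (α : A →ₗ[K] A)
    (h1 : ∀ x y z : A, p (p x y) (α z) = p (α x) (p y z + s y z))
    (h2 : ∀ x y z : A, p (s x y) (α z) = s (α x) (p y z))
    (h3 : ∀ x y z : A, s (α x) (s y z) = s (p x y + s x y) (α z))
    (star : A → A → A) (hstar : ∀ x y, star x y = p x y + s x y) :
    ∀ x y z : A, star (α x) (star y z) = star (star x y) (α z) := by
  intro x y z
  simp only [hstar, map_add, LinearMap.add_apply]
  have e1 := h1 x y z
  have e2 := h2 x y z
  have e3 := h3 x y z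
  simp only [map_add, LinearMap.add_apply] at e1 e3
  rw [e1, e2, e3]; abel
end

section
/- In a Hom-dendriform algebra (A, ≺, ≻, α), the operation x ▷ y = x ≻ y − y ≺ x makes (A, ▷, α) a left Hom-preLie algebra: α(x) ▷ (y ▷ z) − (x ▷ y) ▷ α(z) = α(y) ▷ (x ▷ z) − (y ▷ x) ▷ α(z) for all x, y, z ∈ A. -/
/-- In a Hom-dendriform algebra, `x ▷ y = x ≻ y − y ≺ x` gives a left Hom-preLie algebra. -/
theorem stmt_1 {K A : Type*} [Field K] [AddCommGroup A] [Module K A]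
    (p s : A →ₗ[K] A →ₗ[K] A) (α : A →ₗ[K] A)
    (h1 : ∀ x y z : A, p (p x y) (α z) = p (α x) (p y z + s y z))
    (h2 : ∀ x y z : A, p (s x y) (α z) = s (α x) (p y z))
    (h3 : ∀ x y z : A, s (α x) (s y z) = s (p x y + s x y) (α z))
    (t : A → A → A) (ht : ∀ x y, t x y = s x y - p y x) :
    ∀ x y z : A,
      t (α x) (t y z) - t (t x y) (α z) = t (α y) (t x z) - t (t y x) (α z) := by
  intro x y z
  simp only [ht, map_sub, map_add, LinearMap.sub_apply, LinearMap.add_apply, h1, h2, h3]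
  abel
end

section
/- In a Hom-dendriform algebra (A, ≺, ≻, α), the operation x ◁ y = x ≺ y − y ≻ x makes (A, ◁, α) a right Hom-preLie algebra: α(x) ◁ (y ◁ z) − (x ◁ y) ◁ α(z) = α(x) ◁ (z ◁ y) − (x ◁ z) ◁ α(y) for all x, y, z ∈ A. -/
/-- In a Hom-dendriform algebra, `x ◁ y = x ≺ y − y ≻ x` gives a right Hom-preLie algebra. -/
theorem stmt_2 {K A : Type*} [Field K] [AddCommGroup A] [Module K A]
    (p s : A →ₗ[K] A →ₗ[K] A) (α : A →ₗ[K] A)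
    (h1 : ∀ x y z : A, p (p x y) (α z) = p (α x) (p y z + s y z))
    (h2 : ∀ x y z : A, p (s x y) (α z) = s (α x) (p y z))
    (h3 : ∀ x y z : A, s (α x) (s y z) = s (p x y + s x y) (α z))
    (t : A → A → A) (ht : ∀ x y, t x y = p x y - s y x) :
    ∀ x y z : A,
      t (α x) (t y z) - t (t x y) (α z) = t (α x) (t z y) - t (t x z) (α y) := by
  intro x y z
  simp only [ht, map_sub, map_add, LinearMap.sub_apply, LinearMap.add_apply, h1, h2, h3]
  abel
end

section
/- Let (A, ≺, ≻) be a dendriform algebra and α : A → A an algebra endomorphism (i.e., α(x ≺ y) = α(x) ≺ α(y) and α(x ≻ y) = α(x) ≻ α(y)). Then (A, ≺_α, ≻_α, α) with x ≺_α y = α(x ≺ y) and x ≻_α y = α(x ≻ y) is a Hom-dendriform algebra. -/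
/-- Twisting a dendriform algebra by an endomorphism yields a Hom-dendriform algebra. -/
theorem stmt_3 {K A : Type*} [Field K] [AddCommGroup A] [Module K A]
    (p s : A →ₗ[K] A →ₗ[K] A) (α : A →ₗ[K] A)
    (h1 : ∀ x y z : A, p (p x y) z = p x (p y z + s y z))
    (h2 : ∀ x y z : A, p (s x y) z = s x (p y z))
    (h3 : ∀ x y z : A, s x (s y z) = s (p x y + s x y) z)
    (hαp : ∀ x y : A, α (p x y) = p (α x) (α y))
    (hαs : ∀ x y : A, α (s x y) = s (α x) (α y))
    (pa sa : A → A → A)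
    (hpa : ∀ x y, pa x y = α (p x y)) (hsa : ∀ x y, sa x y = α (s x y)) :
    (∀ x y z : A, pa (pa x y) (α z) = pa (α x) (pa y z + sa y z)) ∧
    (∀ x y z : A, pa (sa x y) (α z) = sa (α x) (pa y z)) ∧
    (∀ x y z : A, sa (α x) (sa y z) = sa (pa x y + sa x y) (α z)) := by
  refine ⟨fun x y z => ?_, fun x y z => ?_, fun x y z => ?_⟩
  · simp only [hpa, hsa, ← map_add, ← hαp, ← hαs, ← map_add, h1]
  · simp only [hpa, hsa, ← hαp, ← hαs, h2]
  · simp only [hpa, hsa, ← map_add, ← hαp, ← hαs, ← map_add, h3]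
end

section
/- Let (A, ≺, ≻, ·, α) be a Hom-tridendriform algebra. Then the operation x ∗ y = x ≺ y + x ≻ y + x · y makes (A, ∗, α) a Hom-associative algebra: α(x) ∗ (y ∗ z) = (x ∗ y) ∗ α(z). -/
/-- In a Hom-tridendriform algebra, `x ∗ y = x ≺ y + x ≻ y + x · y` is Hom-associative. -/
theorem stmt_5 {K A : Type*} [Field K] [AddCommGroup A] [Module K A]
    (p s m : A →ₗ[K] A →ₗ[K] A) (α : A →ₗ[K] A)
    (h1 : ∀ x y z : A, p (p x y) (α z) = p (α x) (p y z + s y z + m y z))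
    (h2 : ∀ x y z : A, p (s x y) (α z) = s (α x) (p y z))
    (h3 : ∀ x y z : A, s (α x) (s y z) = s (p x y + s x y + m x y) (α z))
    (h4 : ∀ x y z : A, m (p x y) (α z) = m (α x) (s y z))
    (h5 : ∀ x y z : A, m (s x y) (α z) = s (α x) (m y z))
    (h6 : ∀ x y z : A, p (m x y) (α z) = m (α x) (p y z))
    (h7 : ∀ x y z : A, m (m x y) (α z) = m (α x) (m y z))
    (star : A → A → A) (hstar : ∀ x y, star x y = p x y + s x y + m x y) :
    ∀ x y z : A, star (α x) (star y z) = star (star x y) (α z) := by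
  intro x y z
  simp only [hstar, map_add, LinearMap.add_apply]
  have e1 := h1 x y z
  have e2 := h2 x y z
  have e3 := h3 x y z
  have e4 := h4 x y z
  have e5 := h5 x y z
  have e6 := h6 x y z
  have e7 := h7 x y z
  simp only [map_add, LinearMap.add_apply] at e1 e3
  linear_combination (norm := abel) -e1 - e2 + e3 - e4 - e5 - e6 - e7
end

section
/- Let (A, ·, R) be an associative Rota-Baxter algebra of weight θ and α : A → A an algebra endomorphism commuting with R (α∘R = R∘α). Then (A, ·_α, α, R) with x ·_α y = α(x·y) is a Hom-associative Rota-Baxter algebra of weight θ: it is Hom-associative and R(x) ·_α R(y) = R(R(x) ·_α y + x ·_α R(y) + θ x ·_α y). -/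
/-- Twisting an associative Rota-Baxter algebra by an endomorphism commuting with `R`
yields a Hom-associative Rota-Baxter algebra. -/
theorem stmt_8 {K A : Type*} [Field K] [AddCommGroup A] [Module K A]
    (μ : A →ₗ[K] A →ₗ[K] A) (α R : A →ₗ[K] A) (θ : K)
    (hassoc : ∀ x y z : A, μ (μ x y) z = μ x (μ y z))
    (hRB : ∀ x y : A, μ (R x) (R y) = R (μ (R x) y + μ x (R y) + θ • μ x y))
    (hα : ∀ x y : A, α (μ x y) = μ (α x) (α y))
    (hcomm : ∀ x : A, α (R x) = R (α x))
    (μα : A → A → A) (hμα : ∀ x y, μα x y = α (μ x y)) :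
    (∀ x y z : A, μα (α x) (μα y z) = μα (μα x y) (α z)) ∧
    (∀ x y : A, μα (R x) (R y) = R (μα (R x) y + μα x (R y) + θ • μα x y)) := by
  constructor
  · intro x y z
    simp only [hμα, ← hα, hassoc]
  · intro x y
    simp only [hμα, ← hcomm, ← map_add, ← map_smul, ← hα]
    rw [(μ x).map_smul, hRB]
end

section
/- Let (A, μ, α, R) be a multiplicative Hom-associative Rota-Baxter algebra of weight θ, where α is invertible and α commutes with R. Then (A, α⁻¹∘μ, R) is an associative Rota-Baxter algebra of weight θ. -/
/-- Untwisting a multiplicative Hom-associative Rota-Baxter algebra with invertible `α`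
yields an associative Rota-Baxter algebra. -/
theorem stmt_9 {K A : Type*} [Field K] [AddCommGroup A] [Module K A]
    (μ : A →ₗ[K] A →ₗ[K] A) (α : A ≃ₗ[K] A) (R : A →ₗ[K] A) (θ : K)
    (hassoc : ∀ x y z : A, μ (α x) (μ y z) = μ (μ x y) (α z))
    (hmult : ∀ x y : A, α (μ x y) = μ (α x) (α y))
    (hRB : ∀ x y : A, μ (R x) (R y) = R (μ (R x) y + μ x (R y) + θ • μ x y))
    (hcomm : ∀ x : A, α (R x) = R (α x))
    (μ' : A → A → A) (hμ' : ∀ x y, μ' x y = α.symm (μ x y)) :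
    (∀ x y z : A, μ' (μ' x y) z = μ' x (μ' y z)) ∧
    (∀ x y : A, μ' (R x) (R y) = R (μ' (R x) y + μ' x (R y) + θ • μ' x y)) := by
  have hinv : ∀ x y : A, α.symm (μ x y) = μ (α.symm x) (α.symm y) := by
    intro x y
    apply α.injective
    rw [α.apply_symm_apply, hmult, α.apply_symm_apply, α.apply_symm_apply]
  have hRinv : ∀ x : A, α.symm (R x) = R (α.symm x) := by
    intro x
    apply α.injective
    rw [α.apply_symm_apply, hcomm, α.apply_symm_apply]
  constructor
  · intro x y z
    simp only [hμ']
    congr 1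
    rw [hinv x y, hinv y z]
    calc μ (μ (α.symm x) (α.symm y)) z
        = μ (μ (α.symm x) (α.symm y)) (α (α.symm z)) := by
          rw [α.apply_symm_apply]
      _ = μ (α (α.symm x)) (μ (α.symm y) (α.symm z)) := (hassoc _ _ _).symm
      _ = μ x (μ (α.symm y) (α.symm z)) := by rw [α.apply_symm_apply]
  · intro x y
    simp only [hμ']
    rw [hRB]
    simp [hRinv, map_add, map_smul]
end

section
/- Let (A, μ, α, R) be a multiplicative Hom-associative Rota-Baxter algebra of weight θ with α∘R = R∘α, and let n ≥ 0. Then the n-th derived Hom-algebra (A, μ⁽ⁿ⁾ = αⁿ∘μ, αⁿ⁺¹, R) is a Hom-associative Rota-Baxter algebra of weight θ. -/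
/-- The `n`-th derived Hom-algebra of a multiplicative Hom-associative Rota-Baxter algebra
is again a Hom-associative Rota-Baxter algebra. -/
theorem stmt_10 {K A : Type*} [Field K] [AddCommGroup A] [Module K A]
    (μ : A →ₗ[K] A →ₗ[K] A) (α R : A →ₗ[K] A) (θ : K) (n : ℕ)
    (hassoc : ∀ x y z : A, μ (α x) (μ y z) = μ (μ x y) (α z))
    (hmult : ∀ x y : A, α (μ x y) = μ (α x) (α y))
    (hRB : ∀ x y : A, μ (R x) (R y) = R (μ (R x) y + μ x (R y) + θ • μ x y))
    (hcomm : ∀ x : A, α (R x) = R (α x))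
    (μn : A → A → A) (hμn : ∀ x y, μn x y = (α ^ n) (μ x y)) :
    (∀ x y z : A, μn ((α ^ (n + 1)) x) (μn y z) = μn (μn x y) ((α ^ (n + 1)) z)) ∧
    (∀ x y : A, μn (R x) (R y) = R (μn (R x) y + μn x (R y) + θ • μn x y)) := by
  have hmultn : ∀ m : ℕ, ∀ x y : A, (α ^ m) (μ x y) = μ ((α ^ m) x) ((α ^ m) y) := by
    intro m
    induction m with
    | zero => intro x y; simp
    | succ k ih =>
        intro x y
        rw [pow_succ]
        simp only [Module.End.mul_apply]
        rw [hmult, ih]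
  have hcommn : ∀ m : ℕ, ∀ x : A, (α ^ m) (R x) = R ((α ^ m) x) := by
    intro m
    induction m with
    | zero => intro x; simp
    | succ k ih =>
        intro x
        rw [pow_succ]
        simp only [Module.End.mul_apply]
        rw [hcomm, ih]
  constructor
  · intro x y z
    simp only [hμn]
    have h1 : (α ^ (n + 1)) x = α ((α ^ n) x) := by
      rw [pow_succ']; rfl
    have h3 : (α ^ (n + 1)) z = α ((α ^ n) z) := by
      rw [pow_succ']; rfl
    rw [h1, h3]
    congr 1
    rw [hmultn n y z, hmultn n x y]
    exact hassoc _ _ _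
  · intro x y
    simp only [hμn]
    rw [hRB, hcommn]
    congr 1
    simp [map_add, map_smul]
end

section
/- Let (A, μ, R) be an associative Rota-Baxter algebra of weight θ, α an element of the centroid of A (α(x·y) = α(x)·y = x·α(y)) commuting with R. Then (A, μ¹_α, α, R) with μ¹_α(x,y) = μ(α(x), y) is a Hom-associative Rota-Baxter algebra of weight θ. -/
/-- A centroid element `α` commuting with `R` turns an associative Rota-Baxter algebra into
a Hom-associative Rota-Baxter algebra via `μ¹_α(x,y) = μ(α x, y)`. -/
theorem stmt_11 {K A : Type*} [Field K] [AddCommGroup A] [Module K A]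
    (μ : A →ₗ[K] A →ₗ[K] A) (α R : A →ₗ[K] A) (θ : K)
    (hassoc : ∀ x y z : A, μ (μ x y) z = μ x (μ y z))
    (hRB : ∀ x y : A, μ (R x) (R y) = R (μ (R x) y + μ x (R y) + θ • μ x y))
    (hc1 : ∀ x y : A, α (μ x y) = μ (α x) y)
    (hc2 : ∀ x y : A, α (μ x y) = μ x (α y))
    (hcomm : ∀ x : A, α (R x) = R (α x))
    (μ1 : A → A → A) (hμ1 : ∀ x y, μ1 x y = μ (α x) y) :
    (∀ x y z : A, μ1 (α x) (μ1 y z) = μ1 (μ1 x y) (α z)) ∧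
    (∀ x y : A, μ1 (R x) (R y) = R (μ1 (R x) y + μ1 x (R y) + θ • μ1 x y)) := by
  constructor
  · intro x y z
    simp only [hμ1]
    rw [hc1 (α x) y, hassoc, ← hc1 y z, hc2]
  · intro x y
    simp only [hμ1, hcomm]
    rw [hRB]
end

section
/- Let (A, μ, R) be an associative Rota-Baxter algebra of weight θ, α an element of the centroid of A commuting with R. Then (A, μ²_α, α, R) with μ²_α(x,y) = μ(α(x), α(y)) is a Hom-associative Rota-Baxter algebra of weight θ. -/
/-- A centroid element `α` commuting with `R` turns an associative Rota-Baxter algebra into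
a Hom-associative Rota-Baxter algebra via `μ²_α(x,y) = μ(α x, α y)`. -/
theorem stmt_12 {K A : Type*} [Field K] [AddCommGroup A] [Module K A]
    (μ : A →ₗ[K] A →ₗ[K] A) (α R : A →ₗ[K] A) (θ : K)
    (hassoc : ∀ x y z : A, μ (μ x y) z = μ x (μ y z))
    (hRB : ∀ x y : A, μ (R x) (R y) = R (μ (R x) y + μ x (R y) + θ • μ x y))
    (hc1 : ∀ x y : A, α (μ x y) = μ (α x) y)
    (hc2 : ∀ x y : A, α (μ x y) = μ x (α y))
    (hcomm : ∀ x : A, α (R x) = R (α x))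
    (μ2 : A → A → A) (hμ2 : ∀ x y, μ2 x y = μ (α x) (α y)) :
    (∀ x y z : A, μ2 (α x) (μ2 y z) = μ2 (μ2 x y) (α z)) ∧
    (∀ x y : A, μ2 (R x) (R y) = R (μ2 (R x) y + μ2 x (R y) + θ • μ2 x y)) := by
  constructor
  · intro x y z
    rw [hμ2, hμ2, hμ2, hμ2, hc2 (α y) (α z), hc1 (α x) (α y), hassoc]
  · intro x y
    simp only [hμ2, hcomm, map_add, map_smul]
    rw [hRB]
    simp only [map_add, map_smul, ← hcomm, hc1, hc2]
end

section
/- Let (A, ·, α, R) be a Hom-associative Rota-Baxter algebra of weight 0 with α∘R = R∘α. Define x ∗ y = R(x)·y − y·R(x). Then (A, ∗, α) is a left Hom-preLie algebra: α(x)∗(y∗z) − (x∗y)∗α(z) = α(y)∗(x∗z) − (y∗x)∗α(z). -/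
/-- For a weight-0 Hom-associative Rota-Baxter algebra, `x ∗ y = R(x)·y − y·R(x)` is left
Hom-preLie. -/
theorem stmt_13 {K A : Type*} [Field K] [AddCommGroup A] [Module K A]
    (μ : A →ₗ[K] A →ₗ[K] A) (α R : A →ₗ[K] A)
    (hassoc : ∀ x y z : A, μ (α x) (μ y z) = μ (μ x y) (α z))
    (hRB : ∀ x y : A, μ (R x) (R y) = R (μ (R x) y + μ x (R y)))
    (hcomm : ∀ x : A, α (R x) = R (α x))
    (t : A → A → A) (ht : ∀ x y, t x y = μ (R x) y - μ y (R x)) :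
    ∀ x y z : A,
      t (α x) (t y z) - t (t x y) (α z) = t (α y) (t x z) - t (t y x) (α z) := by
  intro x y z
  have e1 : ∀ a b c : A, μ (R (μ (R a) b)) c + μ (R (μ a (R b))) c = μ (μ (R a) (R b)) c := by
    intro a b c; rw [hRB, map_add]; simp
  have e2 : ∀ a b c : A, μ c (R (μ (R a) b)) + μ c (R (μ a (R b))) = μ c (μ (R a) (R b)) := by
    intro a b c; rw [hRB, map_add, (μ c).map_add]
  have h1 := hassoc (R x) (R y) z
  have h2 := hassoc (R x) z (R y)
  have h3 := hassoc z (R x) (R y)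
  have h4 := hassoc (R y) (R x) z
  have h5 := hassoc (R y) z (R x)
  have h6 := hassoc z (R y) (R x)
  simp only [ht, map_sub, map_add, LinearMap.sub_apply, LinearMap.add_apply, LinearMap.map_sub,
    LinearMap.map_add, ← hcomm] at *
  linear_combination (norm := module) h1 - h2 + h3 - h4 + h5 - h6
    - e1 x y (α z) + e1 y x (α z) + e2 x y (α z) - e2 y x (α z)
end

section
/- Let (A, ·, α, R) be a Hom-associative Rota-Baxter algebra of weight −1 with α∘R = R∘α. Define x ∗ y = R(x)·y − y·R(x) − x·y. Then (A, ∗, α) is a left Hom-preLie algebra. -/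
/-- For a weight-(−1) Hom-associative Rota-Baxter algebra,
`x ∗ y = R(x)·y − y·R(x) − x·y` is left Hom-preLie. -/
theorem stmt_14 {K A : Type*} [Field K] [AddCommGroup A] [Module K A]
    (μ : A →ₗ[K] A →ₗ[K] A) (α R : A →ₗ[K] A)
    (hassoc : ∀ x y z : A, μ (α x) (μ y z) = μ (μ x y) (α z))
    (hRB : ∀ x y : A, μ (R x) (R y) = R (μ (R x) y + μ x (R y) - μ x y))
    (hcomm : ∀ x : A, α (R x) = R (α x))
    (t : A → A → A) (ht : ∀ x y, t x y = μ (R x) y - μ y (R x) - μ x y) :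
    ∀ x y z : A,
      t (α x) (t y z) - t (t x y) (α z) = t (α y) (t x z) - t (t y x) (α z) := by
  have hR' : ∀ a b : A, R (t a b)
      = μ (R a) (R b) - R (μ a (R b)) - R (μ b (R a)) := by
    intro a b
    rw [ht, hRB]
    simp only [map_add, map_sub]
    abel
  intro x y z
  simp only [ht, hR', map_add, map_sub, LinearMap.add_apply, LinearMap.sub_apply,
    ← hcomm, hassoc, map_add, map_sub, LinearMap.add_apply, LinearMap.sub_apply]
  rw [show μ (μ z (R y)) (α (R x)) = μ (α z) (μ (R y) (R x)) from (hassoc z (R y) (R x)).symm,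
    show μ (μ z (R x)) (α (R y)) = μ (α z) (μ (R x) (R y)) from (hassoc z (R x) (R y)).symm,
    hRB x y, hRB y x]
  simp only [map_add, map_sub, LinearMap.add_apply, LinearMap.sub_apply]
  abel
end

section
/- Let (A, ·, α, R) be a Hom-associative Rota-Baxter algebra of weight 0 with α∘R = R∘α. Define x ≺ y = x·R(y) and x ≻ y = R(x)·y. Then (A, ≺, ≻, α) is a Hom-dendriform algebra. -/
/-- For a weight-0 Hom-associative Rota-Baxter algebra, `x ≺ y = x·R(y)`, `x ≻ y = R(x)·y`
define a Hom-dendriform algebra. -/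
theorem stmt_15 {K A : Type*} [Field K] [AddCommGroup A] [Module K A]
    (μ : A →ₗ[K] A →ₗ[K] A) (α R : A →ₗ[K] A)
    (hassoc : ∀ x y z : A, μ (α x) (μ y z) = μ (μ x y) (α z))
    (hRB : ∀ x y : A, μ (R x) (R y) = R (μ (R x) y + μ x (R y)))
    (hcomm : ∀ x : A, α (R x) = R (α x))
    (p s : A → A → A)
    (hp : ∀ x y, p x y = μ x (R y)) (hs : ∀ x y, s x y = μ (R x) y) :
    (∀ x y z : A, p (p x y) (α z) = p (α x) (p y z + s y z)) ∧
    (∀ x y z : A, p (s x y) (α z) = s (α x) (p y z)) ∧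
    (∀ x y z : A, s (α x) (s y z) = s (p x y + s x y) (α z)) := by
  refine ⟨?_, ?_, ?_⟩ <;> intro x y z <;> simp only [hp, hs]
  · rw [← hcomm, add_comm ((μ y) (R z)), ← hRB, ← hassoc]
  · rw [← hcomm, ← hassoc, hcomm]
  · rw [← hcomm, hassoc, hRB, add_comm]
end

section
/- Let (A, ·, α, R) be a Hom-associative Rota-Baxter algebra of weight θ with α∘R = R∘α. Define x ≺ y = x·R(y) + θ x·y and x ≻ y = R(x)·y. Then (A, ≺, ≻, α) is a Hom-dendriform algebra. -/
/-- For a weight-`θ` Hom-associative Rota-Baxter algebra, `x ≺ y = x·R(y) + θ x·y`,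
`x ≻ y = R(x)·y` define a Hom-dendriform algebra. -/
theorem stmt_16 {K A : Type*} [Field K] [AddCommGroup A] [Module K A]
    (μ : A →ₗ[K] A →ₗ[K] A) (α R : A →ₗ[K] A) (θ : K)
    (hassoc : ∀ x y z : A, μ (α x) (μ y z) = μ (μ x y) (α z))
    (hRB : ∀ x y : A, μ (R x) (R y) = R (μ (R x) y + μ x (R y) + θ • μ x y))
    (hcomm : ∀ x : A, α (R x) = R (α x))
    (p s : A → A → A)
    (hp : ∀ x y, p x y = μ x (R y) + θ • μ x y) (hs : ∀ x y, s x y = μ (R x) y) :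
    (∀ x y z : A, p (p x y) (α z) = p (α x) (p y z + s y z)) ∧
    (∀ x y z : A, p (s x y) (α z) = s (α x) (p y z)) ∧
    (∀ x y z : A, s (α x) (s y z) = s (p x y + s x y) (α z)) := by
  refine ⟨fun x y z => ?_, fun x y z => ?_, fun x y z => ?_⟩
  · simp only [hp, hs, map_add, map_smul, LinearMap.add_apply, LinearMap.smul_apply]
    have h1 : μ (μ x (R y)) (R (α z)) = μ (α x) (μ (R y) (R z)) := by
      rw [← hcomm, hassoc]
    have h2 : μ (μ x y) (R (α z)) = μ (α x) (μ y (R z)) := by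
      rw [← hcomm, hassoc]
    have h3 : μ (μ x (R y)) (α z) = μ (α x) (μ (R y) z) := by rw [hassoc]
    have h4 : μ (μ x y) (α z) = μ (α x) (μ y z) := by rw [hassoc]
    rw [h1, h2, h3, h4, hRB]
    simp only [map_add, map_smul]
    module
  · simp only [hp, hs, map_add, map_smul, LinearMap.add_apply, LinearMap.smul_apply]
    rw [← hcomm x, hassoc, hassoc, hcomm z]
  · simp only [hp, hs, map_add, map_smul, LinearMap.add_apply, LinearMap.smul_apply]
    rw [← hcomm x, hassoc, hRB]
    simp only [map_add, map_smul, LinearMap.add_apply, LinearMap.smul_apply]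
    module
end

section
/- Let (A, ·, α, R) be a Hom-associative Rota-Baxter algebra of weight θ with α∘R = R∘α. Define x ≺ y = x·R(y), x ≻ y = R(x)·y, and x • y = θ x·y. Then (A, ≺, ≻, •, α) is a Hom-tridendriform algebra. -/
/-- For a weight-`θ` Hom-associative Rota-Baxter algebra, `x ≺ y = x·R(y)`, `x ≻ y = R(x)·y`,
`x • y = θ x·y` define a Hom-tridendriform algebra. -/
theorem stmt_17 {K A : Type*} [Field K] [AddCommGroup A] [Module K A]
    (μ : A →ₗ[K] A →ₗ[K] A) (α R : A →ₗ[K] A) (θ : K)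
    (hassoc : ∀ x y z : A, μ (α x) (μ y z) = μ (μ x y) (α z))
    (hRB : ∀ x y : A, μ (R x) (R y) = R (μ (R x) y + μ x (R y) + θ • μ x y))
    (hcomm : ∀ x : A, α (R x) = R (α x))
    (p s m : A → A → A)
    (hp : ∀ x y, p x y = μ x (R y)) (hs : ∀ x y, s x y = μ (R x) y)
    (hm : ∀ x y, m x y = θ • μ x y) :
    (∀ x y z : A, p (p x y) (α z) = p (α x) (p y z + s y z + m y z)) ∧
    (∀ x y z : A, p (s x y) (α z) = s (α x) (p y z)) ∧
    (∀ x y z : A, s (α x) (s y z) = s (p x y + s x y + m x y) (α z)) ∧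
    (∀ x y z : A, m (p x y) (α z) = m (α x) (s y z)) ∧
    (∀ x y z : A, m (s x y) (α z) = s (α x) (m y z)) ∧
    (∀ x y z : A, p (m x y) (α z) = m (α x) (p y z)) ∧
    (∀ x y z : A, m (m x y) (α z) = m (α x) (m y z)) := by
  have key : ∀ y z : A, R (μ y (R z) + μ (R y) z + θ • μ y z) = μ (R y) (R z) := by
    intro y z
    rw [hRB]
    congr 1
    abel
  refine ⟨?_, ?_, ?_, ?_, ?_, ?_, ?_⟩ <;> intro x y z <;>
    simp only [hp, hs, hm, key, ← hcomm, map_smul, LinearMap.smul_apply, hassoc]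
end

section
/- Let (g, [·,·], α, R) be a Hom-Lie Rota-Baxter algebra of weight 0 with α∘R = R∘α. Define x ∗ y = [R(x), y]. Then (g, ∗, α) is a left Hom-preLie algebra: α(x)∗(y∗z) − (x∗y)∗α(z) = α(y)∗(x∗z) − (y∗x)∗α(z). -/
/-- For a weight-0 Hom-Lie Rota-Baxter algebra, `x ∗ y = [R(x), y]` is left Hom-preLie. -/
theorem stmt_19 {K L : Type*} [Field K] [AddCommGroup L] [Module K L]
    (b : L →ₗ[K] L →ₗ[K] L) (α R : L →ₗ[K] L)
    (hskew : ∀ x y : L, b x y = - b y x)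
    (hjac : ∀ x y z : L, b (α x) (b y z) + b (α y) (b z x) + b (α z) (b x y) = 0)
    (hRB : ∀ x y : L, b (R x) (R y) = R (b (R x) y + b x (R y)))
    (hcomm : ∀ x : L, α (R x) = R (α x))
    (t : L → L → L) (ht : ∀ x y, t x y = b (R x) y) :
    ∀ x y z : L,
      t (α x) (t y z) - t (t x y) (α z) = t (α y) (t x z) - t (t y x) (α z) := by
  intro x y z
  simp only [ht]
  have key : b (R x) (R y) = R (b (R x) y) - R (b (R y) x) := by
    rw [hRB, hskew x (R y), map_add, map_neg, sub_eq_add_neg]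
  have j := hjac (R x) (R y) z
  rw [hcomm, hcomm, hskew z (R x), map_neg, key, hskew (α z)] at j
  rw [map_sub, LinearMap.sub_apply] at j
  -- j : b (R (α x)) (b (R y) z) + -(b (R (α y)) (b (R x) z)) +
  --     -(b (R (b (R x) y)) (α z) - b (R (b (R y) x)) (α z)) = 0
  linear_combination (norm := abel) j
end
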